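/- Let H be a real Hilbert space and let C ⊆ H be a nonempty closed set. Assume that for every bounded set B ⊆ H there exists a constant κ_B > 0 such that ⟨v, y − x⟩ ≤ κ_B ‖v‖ ‖y − x‖² for all x, y ∈ C ∩ B and all v ∈ N(C,x). Then C is locally prox-regular; more precisely, for every bounded set B ⊆ H there exists θ_B > 0 such that for every t ∈ [0, θ_B), every x ∈ C ∩ B and every v ∈ N(C,x) with ‖v‖ = 1, one has d_C(x + t v) = t, and in particular x ∈ P_C(x + t v). -/

import Mathlib

open Set Metric MeasureTheory Filter
open scoped RealInnerProductSpace NNReal Topology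

noncomputable section

variable {H : Type*} [NormedAddCommGroup H] [InnerProductSpace ℝ H]

/-- The set of nearest points of `y` in `C`. -/
def projSet (C : Set H) (y : H) : Set H :=
  {z | z ∈ C ∧ ‖y - z‖ = Metric.infDist y C}

/-- The proximal normal cone to `C` at `x`. -/
def proxNormalCone (C : Set H) (x : H) : Set H :=
  {v | ∃ ε : ℝ, 0 < ε ∧ x ∈ projSet C (x + ε • v)}

/-- `C` is `η`-prox-regular (uniformly prox-regular with constant `η`). -/
def IsProxRegular (η : ℝ) (C : Set H) : Prop :=
  ∀ t ∈ Set.Ico (0:ℝ) η, ∀ x ∈ C, ∀ v ∈ proxNormalCone C x, v ≠ 0 →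
    x ∈ projSet C (x + t • ‖v‖⁻¹ • v)

/-- `C` is locally prox-regular. -/
def IsLocallyProxRegular (C : Set H) : Prop :=
  ∀ B : Set H, Bornology.IsBounded B → ∃ η > 0, ∀ t ∈ Set.Ico (0:ℝ) η,
    ∀ x ∈ C ∩ B, ∀ v ∈ proxNormalCone C x, v ≠ 0 →
      x ∈ projSet C (x + t • ‖v‖⁻¹ • v)

/-- Helper: lower bound for `infDist`. -/
lemma my_le_infDist {α : Type*} [MetricSpace α] {x : α} {s : Set α} (hs : s.Nonempty)
    {d : ℝ} (hd : 0 ≤ d) (h : ∀ y ∈ s, d ≤ dist x y) : d ≤ Metric.infDist x s := by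
  have h1 : ENNReal.ofReal d ≤ Metric.infEDist x s := by
    rw [EMetric.le_infEdist]
    intro y hy
    rw [edist_dist]
    exact ENNReal.ofReal_le_ofReal (h y hy)
  have := ENNReal.toReal_mono (Metric.infEdist_ne_top hs) h1
  rwa [ENNReal.toReal_ofReal hd] at this

/-- Positive rescaling stays in the proximal normal cone. -/
lemma smul_mem_proxNormalCone {C : Set H} {x : H} {v : H} (hv : v ∈ proxNormalCone C x)
    {c : ℝ} (hc : 0 < c) : c • v ∈ proxNormalCone C x := by
  obtain ⟨ε, hε, hx⟩ := hv
  refine ⟨ε / c, div_pos hε hc, ?_⟩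
  rwa [smul_smul, div_mul_cancel₀ _ hc.ne']

/-- Core estimate. -/
lemma key_estimate (C : Set H) (hne : C.Nonempty) (hcl : IsClosed C)
    (hyp : ∀ B : Set H, Bornology.IsBounded B → ∃ κ > 0,
      ∀ x ∈ C ∩ B, ∀ y ∈ C ∩ B, ∀ v ∈ proxNormalCone C x,
        ⟪v, y - x⟫ ≤ κ * ‖v‖ * ‖y - x‖ ^ 2)
    (B : Set H) (hB : Bornology.IsBounded B) :
    ∃ θ > 0, ∀ t ∈ Set.Ico (0:ℝ) θ,
      ∀ x ∈ C ∩ B, ∀ v ∈ proxNormalCone C x, ‖v‖ = 1 →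
        Metric.infDist (x + t • v) C = t ∧ x ∈ projSet C (x + t • v) := by
  obtain ⟨R, hR⟩ := hB.subset_closedBall 0
  obtain ⟨κ, hκ, hhyp⟩ := hyp (Metric.closedBall 0 (R + 2)) Metric.isBounded_closedBall
  refine ⟨min 1 (1 / (2 * κ)), lt_min one_pos (by positivity), ?_⟩
  rintro t ⟨ht0, htθ⟩ x ⟨hxC, hxB⟩ v hv hv1
  have ht1 : t < 1 := lt_of_lt_of_le htθ (min_le_left _ _)
  have htκ : 2 * t * κ < 1 := by
    have := lt_of_lt_of_le htθ (min_le_right _ _)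
    rw [lt_div_iff₀ (by positivity)] at this
    linarith
  have hxR : ‖x‖ ≤ R := by
    have := hR hxB
    rwa [Metric.mem_closedBall, dist_zero_right] at this
  have hnorm_tv : ‖t • v‖ = t := by
    rw [norm_smul, hv1, Real.norm_eq_abs, abs_of_nonneg ht0, mul_one]
  -- lower bound
  have hlow : t ≤ Metric.infDist (x + t • v) C := by
    refine my_le_infDist hne ht0 ?_
    intro y hy
    rw [dist_eq_norm]
    have heq : x + t • v - y = t • v - (y - x) := by abel
    by_cases hnear : ‖y - x‖ ≤ 2
    · have hyB : y ∈ Metric.closedBall (0:H) (R + 2) := by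
        rw [Metric.mem_closedBall, dist_zero_right]
        calc ‖y‖ = ‖(y - x) + x‖ := by rw [sub_add_cancel]
          _ ≤ ‖y - x‖ + ‖x‖ := norm_add_le _ _
          _ ≤ R + 2 := by linarith
      have hxB' : x ∈ Metric.closedBall (0:H) (R + 2) := by
        rw [Metric.mem_closedBall, dist_zero_right]; linarith
      have hinner : ⟪v, y - x⟫ ≤ κ * ‖y - x‖ ^ 2 := by
        have := hhyp x ⟨hxC, hxB'⟩ y ⟨hy, hyB⟩ v hv
        rwa [hv1, mul_one] at this
      have hexp : ‖x + t • v - y‖ ^ 2 = t ^ 2 - 2 * (t * ⟪v, y - x⟫) + ‖y - x‖ ^ 2 := by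
        rw [heq, norm_sub_sq_real, real_inner_smul_left, hnorm_tv]
      have hsq : t ^ 2 ≤ ‖x + t • v - y‖ ^ 2 := by
        rw [hexp]
        nlinarith [sq_nonneg ‖y - x‖, mul_le_mul_of_nonneg_left hinner (by linarith : (0:ℝ) ≤ 2 * t)]
      nlinarith [norm_nonneg (x + t • v - y)]
    · push_neg at hnear
      have h1 : ‖y - x‖ - ‖t • v‖ ≤ ‖(y - x) - t • v‖ := norm_sub_norm_le _ _
      rw [heq, ← norm_neg, neg_sub]
      rw [hnorm_tv] at h1
      linarith
  have hup : Metric.infDist (x + t • v) C ≤ t := by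
    have := Metric.infDist_le_dist_of_mem (x := x + t • v) hxC
    rwa [dist_eq_norm, add_sub_cancel_left, hnorm_tv] at this
  have hd : Metric.infDist (x + t • v) C = t := le_antisymm hup hlow
  exact ⟨hd, hxC, by rw [add_sub_cancel_left, hnorm_tv, hd]⟩

theorem hypomonotone_implies_locally_prox_regular
    [CompleteSpace H] (C : Set H) (hne : C.Nonempty) (hcl : IsClosed C)
    (hyp : ∀ B : Set H, Bornology.IsBounded B → ∃ κ > 0,
      ∀ x ∈ C ∩ B, ∀ y ∈ C ∩ B, ∀ v ∈ proxNormalCone C x,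
        ⟪v, y - x⟫ ≤ κ * ‖v‖ * ‖y - x‖ ^ 2) :
    IsLocallyProxRegular C ∧
      ∀ B : Set H, Bornology.IsBounded B → ∃ θ > 0, ∀ t ∈ Set.Ico (0:ℝ) θ,
        ∀ x ∈ C ∩ B, ∀ v ∈ proxNormalCone C x, ‖v‖ = 1 →
          Metric.infDist (x + t • v) C = t ∧ x ∈ projSet C (x + t • v) := by
  constructor
  · intro B hB
    obtain ⟨θ, hθ, hkey⟩ := key_estimate C hne hcl hyp B hB
    refine ⟨θ, hθ, ?_⟩
    intro t ht x hx v hv hvne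
    have hvpos : (0:ℝ) < ‖v‖⁻¹ := by
      simpa using (inv_pos.mpr (norm_pos_iff.mpr hvne))
    have hw : ‖v‖⁻¹ • v ∈ proxNormalCone C x := smul_mem_proxNormalCone hv hvpos
    have hw1 : ‖‖v‖⁻¹ • v‖ = 1 := by
      rw [norm_smul, Real.norm_eq_abs, abs_of_pos hvpos,
        inv_mul_cancel₀ (norm_ne_zero_iff.mpr hvne)]
    exact (hkey t ht x hx _ hw hw1).2
  · intro B hB
    exact key_estimate C hne hcl hyp B hB
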